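/- Let F be a finite field, let n, d, d' ≥ 1, and let ρ be a positive semidefinite d×d complex matrix with Tr ρ = 1. For each x ∈ F^n let σ_x be a positive semidefinite matrix on ℂ^d ⊗ ℂ^{d'} whose partial trace over the second factor equals ρ, let {A_x^a}_{a∈F} be a projective measurement on ℂ^d (orthogonal projections summing to Id), and let {V_x^a}_{a∈F} be positive semidefinite d×d matrices with Σ_{a∈F} V_x^a ≤ Id. Then E_{x∈F^n} Σ_{a∈F} ‖Tr₁[(A_x^a ⊗ Id) σ_x (A_x^a ⊗ Id)] − Tr₁[(√(V_x^a) ⊗ Id) σ_x (√(V_x^a) ⊗ Id)]‖₁ ≤ 2 √(E_{x∈F^n} Σ_{a∈F} Tr((A_x^a − √(V_x^a))² ρ)), where Tr₁ denotes the partial trace over the first tensor factor and x is uniform in F^n. -/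

import Mathlib

open scoped Kronecker ComplexConjugate ComplexOrder Matrix

namespace MIP

noncomputable section

abbrev Mat (d : ℕ) := Matrix (Fin d) (Fin d) ℂ

/-- Real part of the trace. -/
def rTr {m : Type*} [Fintype m] (M : Matrix m m ℂ) : ℝ := M.trace.re

/-- Positive semidefinite square root (`0` if the matrix is not PSD). -/
def psqrt {m : Type*} [Fintype m] [DecidableEq m] (A : Matrix m m ℂ) : Matrix m m ℂ :=
  letI := Classical.propDecidable A.PosSemidef
  if h : A.PosSemidef then
    (h.1.eigenvectorUnitary : Matrix m m ℂ) *
      Matrix.diagonal ((↑) ∘ (√·) ∘ h.1.eigenvalues) *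
      (star h.1.eigenvectorUnitary : Matrix m m ℂ)
  else 0

/-- Loewner order `A ≤ B`. -/
def PSDle {m : Type*} [Fintype m] (A B : Matrix m m ℂ) : Prop := (B - A).PosSemidef

/-- Trace norm of a square complex matrix. -/
def traceNorm {m : Type*} [Fintype m] [DecidableEq m] (M : Matrix m m ℂ) : ℝ :=
  rTr (psqrt (Mᴴ * M))

/-- `‖X‖_ρ² = Tr (X Xᴴ ρ)`. -/
def rhoNormSq {d : ℕ} (ρ X : Mat d) : ℝ := rTr (X * Xᴴ * ρ)

/-- `⟨ψ| M 0 ⊗ ⋯ ⊗ M (r-1) |ψ⟩` (real part). -/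
def tExp {r d : ℕ} (ψ : (Fin r → Fin d) → ℂ) (M : Fin r → Mat d) : ℝ :=
  (∑ v : Fin r → Fin d, ∑ w : Fin r → Fin d,
      conj (ψ v) * (∏ i, M i (v i) (w i)) * ψ w).re

/-- `⟨ψ| M 0 ⊗ ⋯ ⊗ M (r-1) |ψ⟩` (complex value). -/
def tExpC {r d : ℕ} (ψ : (Fin r → Fin d) → ℂ) (M : Fin r → Mat d) : ℂ :=
  ∑ v : Fin r → Fin d, ∑ w : Fin r → Fin d,
      conj (ψ v) * (∏ i, M i (v i) (w i)) * ψ w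

/-- Invariance of a vector in `(ℂ^d)^{⊗r}` under all permutations of the factors. -/
def PermInvariant {r d : ℕ} (ψ : (Fin r → Fin d) → ℂ) : Prop :=
  ∀ σ : Equiv.Perm (Fin r), ∀ v, ψ (v ∘ σ) = ψ v

/-- Reduced density matrix of `|ψ⟩⟨ψ|` on register `i`. -/
def red1 {r d : ℕ} (ψ : (Fin r → Fin d) → ℂ) (i : Fin r) : Mat d :=
  Matrix.of fun j k => ∑ v : Fin r → Fin d,
    if (v i).val = 0 then ψ (Function.update v i j) * conj (ψ (Function.update v i k)) else 0

/-- Reduced density matrix of `|ψ⟩⟨ψ|` on registers `i₁, i₂`. -/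
def red2 {r d : ℕ} (ψ : (Fin r → Fin d) → ℂ) (i₁ i₂ : Fin r) :
    Matrix (Fin d × Fin d) (Fin d × Fin d) ℂ :=
  Matrix.of fun a b => ∑ v : Fin r → Fin d,
    if (v i₁).val = 0 ∧ (v i₂).val = 0 then
      ψ (Function.update (Function.update v i₁ a.1) i₂ a.2) *
        conj (ψ (Function.update (Function.update v i₁ b.1) i₂ b.2))
    else 0

/-- A symmetric projective strategy with `r` provers, questions in `F^n`,
answers in `F`, on local dimension `d`. -/
structure Strategy (r n d : ℕ) (F : Type*) [Field F] [Fintype F] where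
  ψ : (Fin r → Fin d) → ℂ
  A : (Fin n → F) → F → Mat d
  unit : ∑ v : Fin r → Fin d, Complex.normSq (ψ v) = 1
  perm : PermInvariant ψ
  herm : ∀ x a, (A x a).IsHermitian
  proj : ∀ x a, A x a * A x a = A x a
  complete : ∀ x, ∑ a : F, A x a = 1

variable {F : Type*} [Field F] [Fintype F] [DecidableEq F]

/-- Consistency-test acceptance probability. -/
def consProb {r n d : ℕ} (S : Strategy r n d F) : ℝ :=
  (∑ x : Fin n → F, ∑ a : F, tExp S.ψ fun _ => S.A x a) / (Fintype.card F : ℝ) ^ n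

/-- Linearity-test acceptance probability in direction `i`. -/
def linProbDir {r n d : ℕ} (S : Strategy r n d F) (i : Fin n) : ℝ :=
  (∑ x : Fin n → F, ∑ yi : F, ∑ zi : F,
      if yi ≠ x i ∧ zi ≠ x i ∧ yi ≠ zi then
        ∑ α : F, ∑ β : F,
          tExp S.ψ fun j =>
            if j.val = 0 then S.A x (α * x i + β)
            else if j.val = 1 then S.A (Function.update x i yi) (α * yi + β)
            else if j.val = 2 then S.A (Function.update x i zi) (α * zi + β)
            else 1
      else 0) /
    ((Fintype.card F : ℝ) ^ n * ((Fintype.card F : ℝ) - 1) * ((Fintype.card F : ℝ) - 2))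

/-- Linearity-test acceptance probability (averaged over the direction). -/
def linProb {r n d : ℕ} (S : Strategy r n d F) : ℝ :=
  (∑ i : Fin n, linProbDir S i) / n

/-- A multilinear function `F^k → F`. -/
def IsMultilinear {k : ℕ} (g : (Fin k → F) → F) : Prop :=
  ∀ (i : Fin k) (x : Fin k → F), ∃ α β : F, ∀ t : F, g (Function.update x i t) = α * t + β

/-- First `k` coordinates `x_{≤k}`. -/
def xle {n k : ℕ} (hk : k ≤ n) (x : Fin n → F) : Fin k → F :=
  fun j => x (Fin.castLE hk j)

/-- Last `n - k` coordinates `x_{>k}`. -/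
def xgt {n : ℕ} (k : ℕ) (hk : k ≤ n) (x : Fin n → F) : Fin (n - k) → F :=
  fun j => x ⟨k + j.val, by have := j.isLt; omega⟩

/-- The restriction `g(·, x_{k+1},…,x_ℓ)` of `g : F^ℓ → F` to its first `k` variables, the last
`ℓ - k` variables being substituted with the corresponding coordinates of `x ∈ F^n`. -/
def midRestrict {n k ℓ : ℕ} (hkl : k ≤ ℓ) (hl : ℓ ≤ n) (g : (Fin ℓ → F) → F) (x : Fin n → F) :
    (Fin k → F) → F :=
  fun u => g fun j =>
    if h : j.val < k then u ⟨j.val, h⟩ else x ⟨j.val, by have := j.isLt; omega⟩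

/-- A family of sub-measurements of arity `k`, with outcomes the multilinear functions
`F^k → F` (the matrices are indexed by all functions, vanishing on non-multilinear ones). -/
structure SubFamily (n d : ℕ) (F : Type*) [Field F] [Fintype F] [DecidableEq F] (k : ℕ) where
  P : (Fin (n - k) → F) → ((Fin k → F) → F) → Mat d
  psd : ∀ y g, (P y g).PosSemidef
  ml : ∀ y g, ¬ IsMultilinear g → P y g = 0
  sub : ∀ y, (1 - ∑ g : (Fin k → F) → F, P y g).PosSemidef

/-- `cons(P,Q)` for arities `k ≤ ℓ`. -/
def consF {n d k ℓ : ℕ} (hkl : k ≤ ℓ) (hl : ℓ ≤ n)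
    (P : SubFamily n d F k) (Q : SubFamily n d F ℓ)
    (ρ : Matrix (Fin d × Fin d) (Fin d × Fin d) ℂ) : ℝ :=
  (∑ x : Fin n → F, ∑ f : (Fin k → F) → F, ∑ g : (Fin ℓ → F) → F,
      if f = midRestrict hkl hl g x then
        rTr ((P.P (xgt k (hkl.trans hl) x) f ⊗ₖ Q.P (xgt ℓ hl x) g) * ρ)
      else 0) / (Fintype.card F : ℝ) ^ n

/-- `inc(P,Q)` for arities `k ≤ ℓ`. -/
def incF {n d k ℓ : ℕ} (hkl : k ≤ ℓ) (hl : ℓ ≤ n)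
    (P : SubFamily n d F k) (Q : SubFamily n d F ℓ)
    (ρ : Matrix (Fin d × Fin d) (Fin d × Fin d) ℂ) : ℝ :=
  (∑ x : Fin n → F, ∑ f : (Fin k → F) → F, ∑ g : (Fin ℓ → F) → F,
      if f ≠ midRestrict hkl hl g x then
        rTr ((P.P (xgt k (hkl.trans hl) x) f ⊗ₖ Q.P (xgt ℓ hl x) g) * ρ)
      else 0) / (Fintype.card F : ℝ) ^ n

/-- `cons(P,Q)` for arbitrary arities (symmetric convention). -/
def consSym {n d k ℓ : ℕ} (hk : k ≤ n) (hl : ℓ ≤ n)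
    (P : SubFamily n d F k) (Q : SubFamily n d F ℓ)
    (ρ : Matrix (Fin d × Fin d) (Fin d × Fin d) ℂ) : ℝ :=
  if h : k ≤ ℓ then consF h hl P Q ρ else consF (le_of_not_ge h) hk Q P ρ

/-- `inc(P,A)` where `A` are the strategy's measurements (regarded as the arity-0 family). -/
def incA {n d k : ℕ} (hk : k ≤ n) (P : SubFamily n d F k)
    (A : (Fin n → F) → F → Mat d) (ρ : Matrix (Fin d × Fin d) (Fin d × Fin d) ℂ) : ℝ :=
  (∑ x : Fin n → F, ∑ g : (Fin k → F) → F, ∑ a : F,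
      if a ≠ g (xle hk x) then rTr ((P.P (xgt k hk x) g ⊗ₖ A x a) * ρ) else 0) /
    (Fintype.card F : ℝ) ^ n

/-- `Tr_ρ(P)` for a family of sub-measurements, against the one-register density `ρ`. -/
def trF {n d k : ℕ} (P : SubFamily n d F k) (ρ : Mat d) : ℝ :=
  (∑ y : Fin (n - k) → F, ∑ g : (Fin k → F) → F, rTr (P.P y g * ρ)) /
    (Fintype.card F : ℝ) ^ (n - k)

/-- Merge first `k` coordinates `u` and last `n - k` coordinates `y` into a point of `F^n`. -/
def merge {n k : ℕ} (hk : k ≤ n) (u : Fin k → F) (y : Fin (n - k) → F) : Fin n → F :=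
  fun j => if h : j.val < k then u ⟨j.val, h⟩ else y ⟨j.val - k, by have := j.isLt; omega⟩

/-- `E_{x_{≤k}} Ŝ_x^g`, with the last coordinates fixed to `y`. -/
def avgLow {n d k : ℕ} (hk : k ≤ n)
    (Sh : (Fin n → F) → ((Fin k → F) → F) → Mat d)
    (y : Fin (n - k) → F) (g : (Fin k → F) → F) : Mat d :=
  ((Fintype.card F : ℂ) ^ k)⁻¹ • ∑ u : Fin k → F, Sh (merge hk u y) g

/-- Feasibility for the self-improvement convex program. -/
def Feasible {n d k : ℕ} (hk : k ≤ n) (A : (Fin n → F) → F → Mat d)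
    (Sh : (Fin n → F) → ((Fin k → F) → F) → Mat d) : Prop :=
  (∀ x g, ¬ IsMultilinear g → Sh x g = 0) ∧
    ∀ x a, PSDle (∑ g : (Fin k → F) → F,
      if g (xle hk x) = a then Sh x g * (Sh x g)ᴴ else 0) (A x a)

/-- Objective of the self-improvement convex program. -/
def objective {n d k : ℕ} (hk : k ≤ n) (R : SubFamily n d F k) (ρ : Mat d)
    (Sh : (Fin n → F) → ((Fin k → F) → F) → Mat d) : ℝ :=
  (∑ x : Fin n → F, ∑ g : (Fin k → F) → F,
      rhoNormSq ρ (Sh x g - psqrt (R.P (xgt k hk x) g))) / (Fintype.card F : ℝ) ^ n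

/-- Optimum value `ω` of the self-improvement convex program. -/
def progOpt {n d k : ℕ} (hk : k ≤ n) (A : (Fin n → F) → F → Mat d)
    (R : SubFamily n d F k) (ρ : Mat d) : ℝ :=
  sInf {w | ∃ Sh, Feasible hk A Sh ∧ objective hk R ρ Sh = w}


/-- Remove the `i`-th coordinate: `x_{¬i}`. -/
def removeCoord {n : ℕ} (i : Fin n) (x : Fin n → F) : Fin (n - 1) → F :=
  fun j => if h : j.val < i.val then x ⟨j.val, by have := j.isLt; omega⟩
    else x ⟨j.val + 1, by have := j.isLt; omega⟩

/-- Partial trace over the middle factor of `ℂ^d ⊗ ℂ^d ⊗ ℂ^{d'}`. -/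
def ptrace2 {d d' : ℕ} (σ : Matrix (Fin d × Fin d × Fin d') (Fin d × Fin d × Fin d') ℂ) :
    Matrix (Fin d × Fin d') (Fin d × Fin d') ℂ :=
  Matrix.of fun a b => ∑ m : Fin d, σ (a.1, m, a.2) (b.1, m, b.2)

/-- Partial trace over the first factor of `ℂ^d ⊗ ℂ^{d'}`. -/
def ptrFst {d d' : ℕ} (σ : Matrix (Fin d × Fin d') (Fin d × Fin d') ℂ) :
    Matrix (Fin d') (Fin d') ℂ :=
  Matrix.of fun k l => ∑ m : Fin d, σ (m, k) (m, l)

/-- Partial trace over the second factor of `ℂ^d ⊗ ℂ^{d'}`. -/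
def ptrSnd {d d' : ℕ} (σ : Matrix (Fin d × Fin d') (Fin d × Fin d') ℂ) : Mat d :=
  Matrix.of fun i j => ∑ m : Fin d', σ (i, m) (j, m)



section Aux

open scoped MatrixOrder

lemma psqrt_of_psd' {m : Type*} [Fintype m] [DecidableEq m] {A : Matrix m m ℂ}
    (h : A.PosSemidef) : psqrt A = CFC.sqrt A := by
  rw [CFC.sqrt_eq_cfc, cfc_nnreal_eq_real _ A h.nonneg, h.1.cfc_eq]
  simp only [psqrt, dif_pos h, Matrix.IsHermitian.cfc, Unitary.conjStarAlgAut_apply]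
  congr 3
  funext i
  simp [Real.coe_sqrt, Real.coe_toNNReal', max_eq_left (h.eigenvalues_nonneg i)]

lemma psqrt_psd' {m : Type*} [Fintype m] [DecidableEq m] {A : Matrix m m ℂ}
    (h : A.PosSemidef) : (psqrt A).PosSemidef := by
  rw [psqrt_of_psd' h]; exact Matrix.nonneg_iff_posSemidef.mp (CFC.sqrt_nonneg A)

lemma psqrt_mul_self' {m : Type*} [Fintype m] [DecidableEq m] {A : Matrix m m ℂ}
    (h : A.PosSemidef) : psqrt A * psqrt A = A := by
  rw [psqrt_of_psd' h]; exact CFC.sqrt_mul_sqrt_self A h.nonneg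

lemma trace_re_nonneg' {m : Type*} [Fintype m] [DecidableEq m] {M : Matrix m m ℂ}
    (h : M.PosSemidef) : 0 ≤ M.trace.re := by
  rw [Matrix.trace]
  have : (∑ i, M.diag i).re = ∑ i, (M.diag i).re := by
    simp [Complex.re_sum]
  rw [this]
  refine Finset.sum_nonneg fun i _ => ?_
  have := h.2 (Finsupp.single i 1)
  simp [Finsupp.sum_single_index] at this
  exact (Complex.le_def.mp this).1

lemma trace_mul_psd_nonneg' {m : Type*} [Fintype m] [DecidableEq m] {P Q : Matrix m m ℂ}
    (hP : P.PosSemidef) (hQ : Q.PosSemidef) : 0 ≤ (P * Q).trace.re := by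
  have hW : psqrt Q * psqrt Q = Q := psqrt_mul_self' hQ
  have hherm : (psqrt Q).IsHermitian := (psqrt_psd' hQ).1
  have : (P * Q).trace = ((psqrt Q)ᴴ * P * psqrt Q).trace := by
    conv_lhs => rw [← hW]
    rw [hherm.eq, ← Matrix.trace_mul_cycle, mul_assoc]
  rw [this]
  exact trace_re_nonneg' (hP.conjTranspose_mul_mul_same _)

lemma kron_conjTranspose' {l m p q : Type*} (A : Matrix l m ℂ) (B : Matrix p q ℂ) :
    (A ⊗ₖ B)ᴴ = Aᴴ ⊗ₖ Bᴴ := by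
  ext ⟨i, j⟩ ⟨k, l⟩
  simp [Matrix.conjTranspose_apply, Matrix.kroneckerMap_apply]

lemma exists_unitary_traceNorm {m : Type*} [Fintype m] [DecidableEq m] {H : Matrix m m ℂ}
    (hH : H.IsHermitian) :
    ∃ U : Matrix m m ℂ, Uᴴ * U = 1 ∧ traceNorm H = ((U * H).trace).re := by
  set V : Matrix m m ℂ := (Matrix.IsHermitian.eigenvectorUnitary hH : Matrix m m ℂ) with hV
  have hV1 : Vᴴ * V = 1 := by
    rw [← Matrix.star_eq_conjTranspose]
    exact Matrix.mem_unitaryGroup_iff'.mp (Matrix.IsHermitian.eigenvectorUnitary hH).2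
  have hV2 : V * Vᴴ = 1 := by
    rw [← Matrix.star_eq_conjTranspose]
    exact Matrix.mem_unitaryGroup_iff.mp (Matrix.IsHermitian.eigenvectorUnitary hH).2
  set lam := hH.eigenvalues with hlam
  have spec : H = V * Matrix.diagonal (fun i => (lam i : ℂ)) * Vᴴ := by
    conv_lhs => rw [hH.spectral_theorem]
    rfl
  set sgn : m → ℂ := fun i => if 0 ≤ lam i then 1 else -1 with hsgn
  set U : Matrix m m ℂ := V * Matrix.diagonal sgn * Vᴴ with hU
  set P : Matrix m m ℂ := V * Matrix.diagonal (fun i => ((|lam i| : ℝ) : ℂ)) * Vᴴ with hP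
  have sandwich : ∀ f g : m → ℂ,
      (V * Matrix.diagonal f * Vᴴ) * (V * Matrix.diagonal g * Vᴴ)
        = V * Matrix.diagonal (fun i => f i * g i) * Vᴴ := by
    intro f g
    calc (V * Matrix.diagonal f * Vᴴ) * (V * Matrix.diagonal g * Vᴴ)
        = V * Matrix.diagonal f * (Vᴴ * V) * Matrix.diagonal g * Vᴴ := by
          simp only [mul_assoc]
      _ = V * (Matrix.diagonal f * Matrix.diagonal g) * Vᴴ := by
          rw [hV1]; simp only [mul_one, mul_assoc]
      _ = V * Matrix.diagonal (fun i => f i * g i) * Vᴴ := by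
          rw [Matrix.diagonal_mul_diagonal]
  have hfun : (fun i => sgn i * (lam i : ℂ)) = fun i => ((|lam i| : ℝ) : ℂ) := by
    funext i
    by_cases h : 0 ≤ lam i
    · simp [hsgn, h, abs_of_nonneg h]
    · simp [hsgn, h, abs_of_neg (lt_of_not_ge h)]
  have hUH : U * H = P := by
    rw [hU, spec, sandwich, hfun]
  have hUc : Uᴴ = V * Matrix.diagonal (fun i => conj (sgn i)) * Vᴴ := by
    rw [hU]
    simp only [Matrix.conjTranspose_mul, Matrix.conjTranspose_conjTranspose,
      Matrix.diagonal_conjTranspose]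
    simp only [mul_assoc]
    rfl
  have hUU : Uᴴ * U = 1 := by
    rw [hUc, hU, sandwich]
    have : (fun i => conj (sgn i) * sgn i) = fun _ => (1 : ℂ) := by
      funext i
      by_cases h : 0 ≤ lam i <;> simp [hsgn, h]
    rw [this, Matrix.diagonal_one, mul_one, hV2]
  have hPsd : P.PosSemidef := by
    have hd : (Matrix.diagonal (fun i => ((|lam i| : ℝ) : ℂ))).PosSemidef := by
      rw [Matrix.posSemidef_diagonal_iff]
      intro i
      exact_mod_cast Complex.zero_le_real.mpr (abs_nonneg _)
    rw [hP]
    exact hd.mul_mul_conjTranspose_same V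
  have hHH : (Hᴴ * H).PosSemidef := Matrix.posSemidef_conjTranspose_mul_self H
  have hfun2 : (fun i => ((|lam i| : ℝ) : ℂ) * ((|lam i| : ℝ) : ℂ))
      = fun i => ((lam i : ℂ) * (lam i : ℂ)) := by
    funext i
    rw [← Complex.ofReal_mul, ← abs_mul, abs_mul_self, Complex.ofReal_mul]
  have hP2 : P ^ 2 = Hᴴ * H := by
    rw [hH.eq, pow_two, hP, sandwich, hfun2, spec, sandwich]
  have hsq : psqrt (Hᴴ * H) = P := by
    rw [psqrt_of_psd' hHH]; exact CFC.sqrt_unique (by rw [← hP2, pow_two]) hPsd.nonneg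
  have htr : P.trace = ∑ i, ((|lam i| : ℝ) : ℂ) := by
    rw [hP, Matrix.trace_mul_cycle, hV1, one_mul, Matrix.trace_diagonal]
  refine ⟨U, hUU, ?_⟩
  show (psqrt (Hᴴ * H)).trace.re = _
  rw [hsq, hUH, htr]

lemma trace_CS {m : Type*} [Fintype m] [DecidableEq m] (X Y : Matrix m m ℂ) :
    ((Xᴴ * Y).trace).re ≤ Real.sqrt ((Xᴴ * X).trace.re) * Real.sqrt ((Yᴴ * Y).trace.re) := by
  classical
  set x : EuclideanSpace ℂ (m × m) := WithLp.toLp 2 (fun p : m × m => X p.1 p.2) with hx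
  set y : EuclideanSpace ℂ (m × m) := WithLp.toLp 2 (fun p : m × m => Y p.1 p.2) with hy
  have hinner : (Xᴴ * Y).trace = inner ℂ x y := by
    simp only [Matrix.trace, Matrix.diag, Matrix.mul_apply, Matrix.conjTranspose_apply,
      PiLp.inner_apply, RCLike.inner_apply, RCLike.star_def, hx, hy]
    rw [Fintype.sum_prod_type, Finset.sum_comm]
    exact Finset.sum_congr rfl fun _ _ => Finset.sum_congr rfl fun _ _ => mul_comm _ _
  have hXnorm : Real.sqrt ((Xᴴ * X).trace.re) = ‖x‖ := by
    rw [EuclideanSpace.norm_eq]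
    congr 1
    simp only [Matrix.trace, Matrix.diag, Matrix.mul_apply, Matrix.conjTranspose_apply,
      Complex.re_sum, hx]
    rw [Fintype.sum_prod_type, Finset.sum_comm]
    congr 1; funext j; congr 1; funext i
    rw [RCLike.star_def, ← Complex.normSq_eq_conj_mul_self]
    simp only [Complex.normSq_eq_norm_sq]
    rw [Complex.ofReal_re]
  have hYnorm : Real.sqrt ((Yᴴ * Y).trace.re) = ‖y‖ := by
    rw [EuclideanSpace.norm_eq]
    congr 1
    simp only [Matrix.trace, Matrix.diag, Matrix.mul_apply, Matrix.conjTranspose_apply,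
      Complex.re_sum, hy]
    rw [Fintype.sum_prod_type, Finset.sum_comm]
    congr 1; funext j; congr 1; funext i
    rw [RCLike.star_def, ← Complex.normSq_eq_conj_mul_self]
    simp only [Complex.normSq_eq_norm_sq]
    rw [Complex.ofReal_re]
  rw [hinner, hXnorm, hYnorm]
  calc (inner ℂ x y : ℂ).re ≤ ‖(inner ℂ x y : ℂ)‖ := Complex.re_le_norm _
    _ ≤ ‖x‖ * ‖y‖ := norm_inner_le_norm x y

lemma trace_one_kron_mul {d d' : ℕ} (U : Matrix (Fin d') (Fin d') ℂ)
    (M : Matrix (Fin d × Fin d') (Fin d × Fin d') ℂ) :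
    (U * ptrFst M).trace = (((1 : Matrix (Fin d) (Fin d) ℂ) ⊗ₖ U) * M).trace := by
  simp only [Matrix.trace, Matrix.diag, Matrix.mul_apply, ptrFst, Matrix.of_apply,
    Matrix.kroneckerMap_apply, Matrix.one_apply, Fintype.sum_prod_type, ite_mul, one_mul,
    zero_mul, Finset.mul_sum, Finset.sum_ite_eq, Finset.mem_univ, if_true]
  have : ∀ x : Fin d, ∀ x1 : Fin d', (∑ x2 : Fin d, ∑ x3 : Fin d',
      if x = x2 then U x1 x3 * M (x2, x3) (x, x1) else 0)
      = ∑ x3 : Fin d', U x1 x3 * M (x, x3) (x, x1) := by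
    intro x x1
    rw [Finset.sum_comm]
    simp
  simp only [this]
  calc ∑ k : Fin d', ∑ l : Fin d', ∑ i : Fin d, U k l * M (i, l) (i, k)
      = ∑ k : Fin d', ∑ i : Fin d, ∑ l : Fin d', U k l * M (i, l) (i, k) :=
        Finset.sum_congr rfl fun k _ => Finset.sum_comm
    _ = ∑ i : Fin d, ∑ k : Fin d', ∑ l : Fin d', U k l * M (i, l) (i, k) := Finset.sum_comm

lemma trace_kron_one_mul {d d' : ℕ} (N : Matrix (Fin d) (Fin d) ℂ)
    (M : Matrix (Fin d × Fin d') (Fin d × Fin d') ℂ) :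
    ((N ⊗ₖ (1 : Matrix (Fin d') (Fin d') ℂ)) * M).trace = (N * ptrSnd M).trace := by
  simp only [Matrix.trace, Matrix.diag, Matrix.mul_apply, ptrSnd, Matrix.of_apply,
    Matrix.kroneckerMap_apply, Matrix.one_apply, Fintype.sum_prod_type, mul_ite, ite_mul,
    mul_zero, zero_mul, mul_one, Finset.mul_sum, Finset.sum_ite_eq, Finset.mem_univ, if_true]
  exact Finset.sum_congr rfl fun i _ => Finset.sum_comm

lemma ptrFst_isHermitian {d d' : ℕ} {M : Matrix (Fin d × Fin d') (Fin d × Fin d') ℂ}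
    (h : M.IsHermitian) : (ptrFst M).IsHermitian := by
  show (ptrFst M)ᴴ = ptrFst M
  ext k l
  simp only [Matrix.conjTranspose_apply, ptrFst, Matrix.of_apply, star_sum]
  refine Finset.sum_congr rfl fun m _ => ?_
  calc star (M (m, l) (m, k)) = Mᴴ (m, k) (m, l) := rfl
    _ = M (m, k) (m, l) := by rw [h.eq]

lemma sandwich_isHermitian {d d' : ℕ} {S : Matrix (Fin d × Fin d') (Fin d × Fin d') ℂ}
    {X : Mat d} (hS : S.IsHermitian) (hX : X.IsHermitian) :
    ((X ⊗ₖ (1 : Matrix (Fin d') (Fin d') ℂ)) * S *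
      (X ⊗ₖ (1 : Matrix (Fin d') (Fin d') ℂ))).IsHermitian := by
  have hk : (X ⊗ₖ (1 : Matrix (Fin d') (Fin d') ℂ))ᴴ = X ⊗ₖ 1 := by
    rw [kron_conjTranspose', hX.eq, Matrix.conjTranspose_one]
  show _ᴴ = _
  rw [Matrix.conjTranspose_mul, Matrix.conjTranspose_mul, hk, hS.eq, mul_assoc]

lemma sub_kron {d d' : ℕ} (B C : Mat d) :
    (B - C) ⊗ₖ (1 : Matrix (Fin d') (Fin d') ℂ) = B ⊗ₖ 1 - C ⊗ₖ 1 := by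
  ext ⟨i, j⟩ ⟨k, l⟩
  simp [Matrix.kroneckerMap_apply, Matrix.sub_apply, sub_mul]

lemma CS_step {d d' : ℕ} {ρ : Mat d} {S W : Matrix (Fin d × Fin d') (Fin d × Fin d') ℂ}
    {U : Matrix (Fin d') (Fin d') ℂ}
    (hW : W * W = S) (hWh : Wᴴ = W) (hUU : Uᴴ * U = 1) (hSρ : ptrSnd S = ρ)
    {P Q : Mat d} (hP : P.IsHermitian) (hQ : Q.IsHermitian) :
    (((P ⊗ₖ U) * S * (Q ⊗ₖ (1 : Matrix (Fin d') (Fin d') ℂ))).trace).re ≤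
      Real.sqrt (rTr (P * P * ρ)) * Real.sqrt (rTr (Q * Q * ρ)) := by
  set X : Matrix (Fin d × Fin d') (Fin d × Fin d') ℂ := ((P ⊗ₖ U) * W)ᴴ with hX
  set Y : Matrix (Fin d × Fin d') (Fin d × Fin d') ℂ := W * (Q ⊗ₖ 1) with hY
  have hXH : Xᴴ = (P ⊗ₖ U) * W := by rw [hX, Matrix.conjTranspose_conjTranspose]
  have hgoal : (P ⊗ₖ U) * S * (Q ⊗ₖ (1 : Matrix (Fin d') (Fin d') ℂ)) = Xᴴ * Y := by
    rw [hXH, hY, ← hW]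
    simp only [mul_assoc]
  have hXX : (Xᴴ * X).trace = (P * P * ρ).trace := by
    have h1 : Xᴴ * X = (P ⊗ₖ U) * S * (P ⊗ₖ U)ᴴ := by
      rw [hXH, hX, Matrix.conjTranspose_mul, hWh, ← hW]
      simp only [mul_assoc]
    rw [h1, Matrix.trace_mul_cycle]
    have h2 : (P ⊗ₖ U)ᴴ * (P ⊗ₖ U) = (P * P) ⊗ₖ (1 : Matrix (Fin d') (Fin d') ℂ) := by
      rw [kron_conjTranspose', hP.eq, ← Matrix.mul_kronecker_mul, hUU]
    rw [h2, trace_kron_one_mul, hSρ]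
  have hYY : (Yᴴ * Y).trace = (Q * Q * ρ).trace := by
    have h1 : Yᴴ * Y = (Q ⊗ₖ (1 : Matrix (Fin d') (Fin d') ℂ)) * S *
        (Q ⊗ₖ (1 : Matrix (Fin d') (Fin d') ℂ)) := by
      rw [hY, Matrix.conjTranspose_mul, hWh, kron_conjTranspose', hQ.eq,
        Matrix.conjTranspose_one, ← hW]
      simp only [mul_assoc]
    rw [h1, Matrix.trace_mul_cycle, ← Matrix.mul_kronecker_mul, one_mul,
      trace_kron_one_mul, hSρ]
  have := trace_CS X Y
  rw [hXX, hYY] at this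
  rw [hgoal]
  exact this

lemma key {d d' : ℕ} {ρ : Mat d} {S : Matrix (Fin d × Fin d') (Fin d × Fin d') ℂ}
    {B C : Mat d} (hρ : ρ.PosSemidef) (hS : S.PosSemidef) (hSρ : ptrSnd S = ρ)
    (hB : B.IsHermitian) (hC : C.IsHermitian) :
    traceNorm (ptrFst ((B ⊗ₖ (1 : Matrix (Fin d') (Fin d') ℂ)) * S *
        (B ⊗ₖ (1 : Matrix (Fin d') (Fin d') ℂ))) -
      ptrFst ((C ⊗ₖ (1 : Matrix (Fin d') (Fin d') ℂ)) * S *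
        (C ⊗ₖ (1 : Matrix (Fin d') (Fin d') ℂ)))) ≤
      Real.sqrt (rTr ((B - C) * (B - C) * ρ)) *
        (Real.sqrt (rTr (B * B * ρ)) + Real.sqrt (rTr (C * C * ρ))) := by
  classical
  set W := psqrt S with hWdef
  have hW : W * W = S := psqrt_mul_self' hS
  have hWh : Wᴴ = W := (psqrt_psd' hS).1
  set M₁ := (B ⊗ₖ (1 : Matrix (Fin d') (Fin d') ℂ)) * S *
    (B ⊗ₖ (1 : Matrix (Fin d') (Fin d') ℂ)) with hM₁
  set M₂ := (C ⊗ₖ (1 : Matrix (Fin d') (Fin d') ℂ)) * S *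
    (C ⊗ₖ (1 : Matrix (Fin d') (Fin d') ℂ)) with hM₂
  have hN : (ptrFst M₁ - ptrFst M₂).IsHermitian :=
    (ptrFst_isHermitian (sandwich_isHermitian hS.1 hB)).sub
      (ptrFst_isHermitian (sandwich_isHermitian hS.1 hC))
  obtain ⟨U, hUU, htn⟩ := exists_unitary_traceNorm hN
  set D := B - C with hD
  have hDh : D.IsHermitian := hB.sub hC
  have hsplit : M₁ - M₂ = (D ⊗ₖ (1 : Matrix (Fin d') (Fin d') ℂ)) * S *
      (B ⊗ₖ (1 : Matrix (Fin d') (Fin d') ℂ)) +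
      (C ⊗ₖ (1 : Matrix (Fin d') (Fin d') ℂ)) * S *
      (D ⊗ₖ (1 : Matrix (Fin d') (Fin d') ℂ)) := by
    rw [hM₁, hM₂, hD, sub_kron]
    noncomm_ring
  have htr : (U * (ptrFst M₁ - ptrFst M₂)).trace =
      ((D ⊗ₖ U) * S * (B ⊗ₖ (1 : Matrix (Fin d') (Fin d') ℂ))).trace +
      ((C ⊗ₖ U) * S * (D ⊗ₖ (1 : Matrix (Fin d') (Fin d') ℂ))).trace := by
    have e1 : (U * (ptrFst M₁ - ptrFst M₂)).trace =
        (((1 : Mat d) ⊗ₖ U) * (M₁ - M₂)).trace := by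
      rw [mul_sub, Matrix.trace_sub, trace_one_kron_mul, trace_one_kron_mul,
        mul_sub, Matrix.trace_sub]
    rw [e1, hsplit, mul_add, Matrix.trace_add]
    congr 1
    · rw [← mul_assoc, ← mul_assoc, ← Matrix.mul_kronecker_mul, one_mul, mul_one]
    · rw [← mul_assoc, ← mul_assoc, ← Matrix.mul_kronecker_mul, one_mul, mul_one]
  have h1 := CS_step hW hWh hUU hSρ hDh hB
  have h2 := CS_step hW hWh hUU hSρ hC hDh
  rw [htn, htr]
  rw [Complex.add_re]
  calc (((D ⊗ₖ U) * S * (B ⊗ₖ (1 : Matrix (Fin d') (Fin d') ℂ))).trace).re +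
        (((C ⊗ₖ U) * S * (D ⊗ₖ (1 : Matrix (Fin d') (Fin d') ℂ))).trace).re ≤
      Real.sqrt (rTr (D * D * ρ)) * Real.sqrt (rTr (B * B * ρ)) +
        Real.sqrt (rTr (C * C * ρ)) * Real.sqrt (rTr (D * D * ρ)) := add_le_add h1 h2
    _ = Real.sqrt (rTr ((B - C) * (B - C) * ρ)) *
        (Real.sqrt (rTr (B * B * ρ)) + Real.sqrt (rTr (C * C * ρ))) := by
      rw [← hD]; ring

lemma sqrt_sum_CS {ι : Type*} [Fintype ι] (f g : ι → ℝ) (hf : ∀ i, 0 ≤ f i)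
    (hg : ∀ i, 0 ≤ g i) :
    ∑ i, Real.sqrt (f i) * Real.sqrt (g i) ≤
      Real.sqrt (∑ i, f i) * Real.sqrt (∑ i, g i) := by
  have hsq : (∑ i, Real.sqrt (f i) * Real.sqrt (g i)) ^ 2 ≤ (∑ i, f i) * ∑ i, g i := by
    refine Finset.sum_sq_le_sum_mul_sum_of_sq_eq_mul _ (fun i _ => hf i) (fun i _ => hg i)
      fun i _ => ?_
    rw [mul_pow, Real.sq_sqrt (hf i), Real.sq_sqrt (hg i)]
  have hnn : 0 ≤ ∑ i, Real.sqrt (f i) * Real.sqrt (g i) :=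
    Finset.sum_nonneg fun i _ => mul_nonneg (Real.sqrt_nonneg _) (Real.sqrt_nonneg _)
  calc ∑ i, Real.sqrt (f i) * Real.sqrt (g i)
      = Real.sqrt ((∑ i, Real.sqrt (f i) * Real.sqrt (g i)) ^ 2) := by
        rw [Real.sqrt_sq hnn]
    _ ≤ Real.sqrt ((∑ i, f i) * ∑ i, g i) := Real.sqrt_le_sqrt hsq
    _ = Real.sqrt (∑ i, f i) * Real.sqrt (∑ i, g i) :=
        Real.sqrt_mul (Finset.sum_nonneg fun i _ => hf i) _

end Aux

theorem statement19 (F : Type) [Field F] [Fintype F] [DecidableEq F] (n d d' : ℕ)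
    (ρ : Mat d)
    (σ : (Fin n → F) → Matrix (Fin d × Fin d') (Fin d × Fin d') ℂ)
    (A V : (Fin n → F) → F → Mat d)
    (hn : 1 ≤ n) (hd : 1 ≤ d) (hd' : 1 ≤ d')
    (hρ : ρ.PosSemidef) (hρ1 : ρ.trace = 1)
    (hσ : ∀ x, (σ x).PosSemidef) (hσρ : ∀ x, ptrSnd (σ x) = ρ)
    (hAh : ∀ x a, (A x a).IsHermitian) (hAp : ∀ x a, A x a * A x a = A x a)
    (hAc : ∀ x, ∑ a : F, A x a = 1)
    (hV : ∀ x a, (V x a).PosSemidef) (hVs : ∀ x, PSDle (∑ a : F, V x a) 1) :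
    (∑ x : Fin n → F, ∑ a : F,
        traceNorm (ptrFst ((A x a ⊗ₖ (1 : Matrix (Fin d') (Fin d') ℂ)) * σ x *
              (A x a ⊗ₖ (1 : Matrix (Fin d') (Fin d') ℂ))) -
            ptrFst ((psqrt (V x a) ⊗ₖ (1 : Matrix (Fin d') (Fin d') ℂ)) * σ x *
              (psqrt (V x a) ⊗ₖ (1 : Matrix (Fin d') (Fin d') ℂ))))) /
        (Fintype.card F : ℝ) ^ n ≤
      2 * Real.sqrt ((∑ x : Fin n → F, ∑ a : F,
          rTr ((A x a - psqrt (V x a)) * (A x a - psqrt (V x a)) * ρ)) /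
        (Fintype.card F : ℝ) ^ n) := by
  classical
  have hcard : 0 < (Fintype.card F : ℝ) := by exact_mod_cast Fintype.card_pos
  set Qr : ℝ := (Fintype.card F : ℝ) ^ n with hQr
  have hQpos : 0 < Qr := by positivity
  set C : (Fin n → F) → F → Mat d := fun x a => psqrt (V x a) with hCdef
  have hCh : ∀ x a, (C x a).IsHermitian := fun x a => (psqrt_psd' (hV x a)).1
  have hCC : ∀ x a, C x a * C x a = V x a := fun x a => psqrt_mul_self' (hV x a)
  set t : (Fin n → F) → F → ℝ :=
    fun x a => rTr ((A x a - C x a) * (A x a - C x a) * ρ) with htdef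
  set s : (Fin n → F) → F → ℝ := fun x a => rTr (A x a * A x a * ρ) with hsdef
  set s' : (Fin n → F) → F → ℝ := fun x a => rTr (C x a * C x a * ρ) with hs'def
  set tn : (Fin n → F) → F → ℝ := fun x a =>
    traceNorm (ptrFst ((A x a ⊗ₖ (1 : Matrix (Fin d') (Fin d') ℂ)) * σ x *
        (A x a ⊗ₖ (1 : Matrix (Fin d') (Fin d') ℂ))) -
      ptrFst ((C x a ⊗ₖ (1 : Matrix (Fin d') (Fin d') ℂ)) * σ x *
        (C x a ⊗ₖ (1 : Matrix (Fin d') (Fin d') ℂ)))) with htndef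
  have ht : ∀ x a, 0 ≤ t x a := by
    intro x a
    have hD : (A x a - C x a).IsHermitian := (hAh x a).sub (hCh x a)
    have hDD : ((A x a - C x a) * (A x a - C x a)).PosSemidef := by
      have := Matrix.posSemidef_conjTranspose_mul_self (A x a - C x a)
      rwa [hD.eq] at this
    exact trace_mul_psd_nonneg' hDD hρ
  have hs : ∀ x a, 0 ≤ s x a := by
    intro x a
    have hAA : (A x a * A x a).PosSemidef := by
      have := Matrix.posSemidef_conjTranspose_mul_self (A x a)
      rwa [(hAh x a).eq] at this
    exact trace_mul_psd_nonneg' hAA hρ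
  have hs' : ∀ x a, 0 ≤ s' x a := by
    intro x a
    have hCC' : (C x a * C x a).PosSemidef := by
      have := Matrix.posSemidef_conjTranspose_mul_self (C x a)
      rwa [(hCh x a).eq] at this
    exact trace_mul_psd_nonneg' hCC' hρ
  have hkey : ∀ x a, tn x a ≤
      Real.sqrt (t x a) * Real.sqrt (s x a) + Real.sqrt (t x a) * Real.sqrt (s' x a) := by
    intro x a
    have := key (d' := d') hρ (hσ x) (hσρ x) (hAh x a) (hCh x a)
    rw [mul_add] at this
    exact this
  -- sum of s over all (x, a) equals Qr
  have hsum_s : ∑ x : Fin n → F, ∑ a : F, s x a = Qr := by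
    have hsx : ∀ x, ∑ a : F, s x a = 1 := by
      intro x
      have e1 : ∀ a : F, s x a = ((A x a) * ρ).trace.re := by
        intro a
        show ((A x a * A x a) * ρ).trace.re = _
        rw [hAp x a]
      calc ∑ a : F, s x a = ∑ a : F, ((A x a) * ρ).trace.re := by
            exact Finset.sum_congr rfl fun a _ => e1 a
        _ = ((∑ a : F, A x a) * ρ).trace.re := by
            rw [Finset.sum_mul, Matrix.trace_sum, Complex.re_sum]
        _ = 1 := by rw [hAc x, one_mul, hρ1, Complex.one_re]
    calc ∑ x : Fin n → F, ∑ a : F, s x a = ∑ _x : Fin n → F, (1 : ℝ) :=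
          Finset.sum_congr rfl fun x _ => hsx x
      _ = (Fintype.card (Fin n → F) : ℝ) := by
          rw [Finset.sum_const, Finset.card_univ, nsmul_eq_mul, mul_one]
      _ = Qr := by
          rw [hQr, Fintype.card_fun, Fintype.card_fin]
          push_cast
          ring
  have hsum_s' : ∑ x : Fin n → F, ∑ a : F, s' x a ≤ Qr := by
    have hsx : ∀ x, ∑ a : F, s' x a ≤ 1 := by
      intro x
      have e1 : ∀ a : F, s' x a = ((V x a) * ρ).trace.re := by
        intro a
        show ((C x a * C x a) * ρ).trace.re = _
        rw [hCC x a]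
      have e2 : ∑ a : F, s' x a = ((∑ a : F, V x a) * ρ).trace.re := by
        calc ∑ a : F, s' x a = ∑ a : F, ((V x a) * ρ).trace.re :=
              Finset.sum_congr rfl fun a _ => e1 a
          _ = ((∑ a : F, V x a) * ρ).trace.re := by
              rw [Finset.sum_mul, Matrix.trace_sum, Complex.re_sum]
      have e3 : 0 ≤ (((1 : Mat d) - ∑ a : F, V x a) * ρ).trace.re :=
        trace_mul_psd_nonneg' (hVs x) hρ
      rw [sub_mul, Matrix.trace_sub, Complex.sub_re, one_mul, hρ1, Complex.one_re] at e3
      rw [e2]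
      linarith
    calc ∑ x : Fin n → F, ∑ a : F, s' x a ≤ ∑ _x : Fin n → F, (1 : ℝ) :=
          Finset.sum_le_sum fun x _ => hsx x
      _ = (Fintype.card (Fin n → F) : ℝ) := by
          rw [Finset.sum_const, Finset.card_univ, nsmul_eq_mul, mul_one]
      _ = Qr := by
          rw [hQr, Fintype.card_fun, Fintype.card_fin]
          push_cast
          ring
  set T : ℝ := ∑ x : Fin n → F, ∑ a : F, t x a with hTdef
  have hT : 0 ≤ T := Finset.sum_nonneg fun x _ => Finset.sum_nonneg fun a _ => ht x a
  -- Cauchy-Schwarz over the double sum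
  have hcs1 : ∑ x : Fin n → F, ∑ a : F, Real.sqrt (t x a) * Real.sqrt (s x a) ≤
      Real.sqrt T * Real.sqrt (∑ x : Fin n → F, ∑ a : F, s x a) := by
    have h := sqrt_sum_CS (fun p : (Fin n → F) × F => t p.1 p.2)
      (fun p : (Fin n → F) × F => s p.1 p.2) (fun p => ht p.1 p.2) (fun p => hs p.1 p.2)
    rw [Fintype.sum_prod_type, Fintype.sum_prod_type, Fintype.sum_prod_type] at h
    exact h
  have hcs2 : ∑ x : Fin n → F, ∑ a : F, Real.sqrt (t x a) * Real.sqrt (s' x a) ≤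
      Real.sqrt T * Real.sqrt (∑ x : Fin n → F, ∑ a : F, s' x a) := by
    have h := sqrt_sum_CS (fun p : (Fin n → F) × F => t p.1 p.2)
      (fun p : (Fin n → F) × F => s' p.1 p.2) (fun p => ht p.1 p.2) (fun p => hs' p.1 p.2)
    rw [Fintype.sum_prod_type, Fintype.sum_prod_type, Fintype.sum_prod_type] at h
    exact h
  have hbound : ∑ x : Fin n → F, ∑ a : F, tn x a ≤ 2 * (Real.sqrt T * Real.sqrt Qr) := by
    calc ∑ x : Fin n → F, ∑ a : F, tn x a
        ≤ ∑ x : Fin n → F, ∑ a : F,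
            (Real.sqrt (t x a) * Real.sqrt (s x a) +
              Real.sqrt (t x a) * Real.sqrt (s' x a)) :=
          Finset.sum_le_sum fun x _ => Finset.sum_le_sum fun a _ => hkey x a
      _ = (∑ x : Fin n → F, ∑ a : F, Real.sqrt (t x a) * Real.sqrt (s x a)) +
            ∑ x : Fin n → F, ∑ a : F, Real.sqrt (t x a) * Real.sqrt (s' x a) := by
          rw [← Finset.sum_add_distrib]
          exact Finset.sum_congr rfl fun x _ => Finset.sum_add_distrib
      _ ≤ Real.sqrt T * Real.sqrt (∑ x : Fin n → F, ∑ a : F, s x a) +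
            Real.sqrt T * Real.sqrt (∑ x : Fin n → F, ∑ a : F, s' x a) :=
          add_le_add hcs1 hcs2
      _ ≤ Real.sqrt T * Real.sqrt Qr + Real.sqrt T * Real.sqrt Qr := by
          refine add_le_add ?_ ?_
          · rw [hsum_s]
          · exact mul_le_mul_of_nonneg_left (Real.sqrt_le_sqrt hsum_s') (Real.sqrt_nonneg _)
      _ = 2 * (Real.sqrt T * Real.sqrt Qr) := by ring
  -- final arithmetic
  have gen : ∀ a b : ℝ, 0 < b → a * Real.sqrt b / b = a / Real.sqrt b := by
    intro a b hb
    have hb' : Real.sqrt b ≠ 0 := by positivity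
    field_simp
    rw [Real.sq_sqrt hb.le]
  have hfin : 2 * (Real.sqrt T * Real.sqrt Qr) / Qr = 2 * Real.sqrt (T / Qr) := by
    rw [Real.sqrt_div hT, mul_div_assoc, gen _ _ hQpos]
  calc (∑ x : Fin n → F, ∑ a : F, tn x a) / Qr
      ≤ 2 * (Real.sqrt T * Real.sqrt Qr) / Qr := (div_le_div_iff_of_pos_right hQpos).mpr hbound
    _ = 2 * Real.sqrt (T / Qr) := hfin
end

end MIP
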